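/- Let G be a finitely generated nilpotent group that is not virtually abelian, and let 1 = Z₀ ⊆ Z₁ ⊆ Z₂ ⊆ ⋯ be the upper central series of G (so Z_{i+1}/Z_i is the center of G/Z_i). Then there exist g ∈ G and h ∈ Z₂ such that the commutator [g,h] = g⁻¹h⁻¹gh has infinite order. -/

import Mathlib

open Subgroup Pointwise Monoid

/-- A subgroup of a commutative group generated by finitely many torsion elements
is finite. -/
private lemma finite_closure_torsion {A : Type*} [CommGroup A] (S : Finset A)
    (hS : ∀ a ∈ S, IsOfFinOrder a) :
    ((Subgroup.closure (S : Set A) : Subgroup A) : Set A).Finite := by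
  classical
  induction S using Finset.induction_on with
  | empty => simp [Subgroup.closure_empty]
  | @insert a S ha ih =>
    have hfin1 : ((Subgroup.zpowers a : Subgroup A) : Set A).Finite :=
      finite_zpowers.mpr (hS a (Finset.mem_insert_self a S))
    have hfin2 := ih (fun x hx => hS x (Finset.mem_insert_of_mem hx))
    have : (closure (↑(insert a S) : Set A) : Subgroup A)
        = Subgroup.zpowers a ⊔ closure (S : Set A) := by
      rw [Finset.coe_insert, Set.insert_eq, Subgroup.closure_union,
        Subgroup.zpowers_eq_closure]
    rw [this]
    rw [show ((Subgroup.zpowers a ⊔ closure (S : Set A) : Subgroup A) : Set A)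
        = (Subgroup.zpowers a : Set A) * (closure (S : Set A) : Set A) from
      Subgroup.mul_normal _ _]
    exact hfin1.mul hfin2

/-- A finitely generated torsion commutative group is finite. -/
private lemma finite_of_comm_fg_torsion (A : Type*) [CommGroup A] (h : Group.FG A)
    (ht : Monoid.IsTorsion A) : Finite A := by
  obtain ⟨n, T, -, hT⟩ := Group.fg_iff'.mp h
  have := finite_closure_torsion T (fun a _ => ht a)
  rw [hT] at this
  simpa [Set.finite_univ_iff] using this

/-- If all commutators with `z` are central, then commutators with powers of `z`
are the corresponding powers of commutators. -/
private lemma comm_pow_eq {K : Type*} [Group K] (z : K)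
    (hz : ∀ g : K, z * g * z⁻¹ * g⁻¹ ∈ Subgroup.center K) (g : K) :
    ∀ n : ℕ, z ^ n * g * (z ^ n)⁻¹ * g⁻¹ = (z * g * z⁻¹ * g⁻¹) ^ n := by
  intro n
  induction n with
  | zero => simp
  | succ n ih =>
    have hc : z ^ n * (z * g * z⁻¹ * g⁻¹) = (z * g * z⁻¹ * g⁻¹) * z ^ n :=
      Subgroup.mem_center_iff.mp (hz g) (z ^ n)
    calc z ^ (n + 1) * g * (z ^ (n + 1))⁻¹ * g⁻¹
        = z ^ n * ((z * g * z⁻¹ * g⁻¹) * g) * (z ^ n)⁻¹ * g⁻¹ := by group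
      _ = (z * g * z⁻¹ * g⁻¹) * (z ^ n * g * (z ^ n)⁻¹ * g⁻¹) := by
          rw [show z ^ n * ((z * g * z⁻¹ * g⁻¹) * g) * (z ^ n)⁻¹ * g⁻¹
              = (z ^ n * (z * g * z⁻¹ * g⁻¹)) * g * (z ^ n)⁻¹ * g⁻¹ by group, hc]
          group
      _ = (z * g * z⁻¹ * g⁻¹) ^ (n + 1) := by rw [ih, pow_succ']

/-- In a finitely generated group, if an element `z` has all its commutators
central and of finite order, then some positive power of `z` is central. -/
private lemma core_power_central {K : Type*} [Group K] (hK : Group.FG K) (z : K)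
    (hz : ∀ g : K, z * g * z⁻¹ * g⁻¹ ∈ Subgroup.center K)
    (hfin : ∀ g : K, IsOfFinOrder (z * g * z⁻¹ * g⁻¹)) :
    ∃ M : ℕ, 0 < M ∧ z ^ M ∈ Subgroup.center K := by
  classical
  obtain ⟨n, S, -, hS⟩ := Group.fg_iff'.mp hK
  set M : ℕ := ∏ x ∈ S, orderOf (z * x * z⁻¹ * x⁻¹) with hM
  have hMpos : 0 < M :=
    Finset.prod_pos (fun x _ => orderOf_pos_iff.mpr (hfin x))
  refine ⟨M, hMpos, ?_⟩
  have hcomm : ∀ x ∈ S, z ^ M * x = x * z ^ M := by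
    intro x hx
    have hdvd : orderOf (z * x * z⁻¹ * x⁻¹) ∣ M := Finset.dvd_prod_of_mem _ hx
    have h1 : (z * x * z⁻¹ * x⁻¹) ^ M = 1 := orderOf_dvd_iff_pow_eq_one.mp hdvd
    have h2 : z ^ M * x * (z ^ M)⁻¹ * x⁻¹ = 1 := by rw [comm_pow_eq z hz x M, h1]
    exact commutatorElement_eq_one_iff_mul_comm.mp
      (by simpa [commutatorElement_def] using h2)
  have hle : Subgroup.closure (S : Set K) ≤ Subgroup.centralizer {z ^ M} := by
    rw [Subgroup.closure_le]
    intro x hx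
    simp only [SetLike.mem_coe, Subgroup.mem_centralizer_iff, Set.mem_singleton_iff]
    rintro h rfl
    exact hcomm x hx
  rw [hS] at hle
  rw [Subgroup.mem_center_iff]
  intro g
  have hg : g ∈ Subgroup.centralizer {z ^ M} := hle (Subgroup.mem_top g)
  exact (Subgroup.mem_centralizer_iff.mp hg (z ^ M) rfl).symm

/-- Characterization of centrality in a quotient group. -/
private lemma mk_mem_center_iff {G : Type*} [Group G] (N : Subgroup G) [N.Normal] (w : G) :
    ((w : G ⧸ N) ∈ Subgroup.center (G ⧸ N)) ↔ ∀ g : G, w * g * w⁻¹ * g⁻¹ ∈ N := by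
  rw [Subgroup.mem_center_iff]
  constructor
  · intro hc g
    have h1 : (g : G ⧸ N) * (w : G ⧸ N) = (w : G ⧸ N) * (g : G ⧸ N) := hc g
    have : ((w * g * w⁻¹ * g⁻¹ : G) : G ⧸ N) = 1 := by
      simp only [QuotientGroup.mk_mul, QuotientGroup.mk_inv]
      rw [← h1]
      group
    exact (QuotientGroup.eq_one_iff _).mp this
  · intro h y
    obtain ⟨g, rfl⟩ := QuotientGroup.mk_surjective y
    have : ((w * g * w⁻¹ * g⁻¹ : G) : G ⧸ N) = 1 := (QuotientGroup.eq_one_iff _).mpr (h g)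
    simp only [QuotientGroup.mk_mul, QuotientGroup.mk_inv] at this
    have h2 : (w : G ⧸ N) * g * (w : G ⧸ N)⁻¹ * (g : G ⧸ N)⁻¹ = 1 := this
    exact (commutatorElement_eq_one_iff_mul_comm.mp
      (by simpa [commutatorElement_def] using h2)).symm

/-- Under the torsion-commutator assumption, every element of `Z_{i+2}` has a
positive power lying in `Z_{i+1}`. -/
private lemma step_lemma {G : Type*} [Group G] (hfg : Group.FG G)
    (Hyp : ∀ g h : G, h ∈ Subgroup.upperCentralSeries G 2 → IsOfFinOrder (h * g * h⁻¹ * g⁻¹)) :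
    ∀ i : ℕ, ∀ h ∈ Subgroup.upperCentralSeries G (i + 2),
      ∃ m : ℕ, 0 < m ∧ h ^ m ∈ Subgroup.upperCentralSeries G (i + 1) := by
  intro i
  induction i with
  | zero =>
    intro h hh
    have hz : ∀ g : G, h * g * h⁻¹ * g⁻¹ ∈ Subgroup.center G := by
      intro g
      have := Subgroup.mem_upperCentralSeries_succ_iff.mp hh g
      rwa [Subgroup.upperCentralSeries_one] at this
    obtain ⟨M, hM, hc⟩ := core_power_central hfg h hz (fun g => Hyp g h hh)
    exact ⟨M, hM, by rwa [Subgroup.upperCentralSeries_one]⟩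
  | succ i ih =>
    intro h hh
    set N := Subgroup.upperCentralSeries G (i + 1) with hN
    haveI : Group.FG G := hfg
    have hz : ∀ y : G ⧸ N, (h : G ⧸ N) * y * (h : G ⧸ N)⁻¹ * y⁻¹ ∈ Subgroup.center (G ⧸ N) := by
      intro y
      obtain ⟨g, rfl⟩ := QuotientGroup.mk_surjective y
      have h2 : h * g * h⁻¹ * g⁻¹ ∈ Subgroup.upperCentralSeries G (i + 2) :=
        Subgroup.mem_upperCentralSeries_succ_iff.mp hh g
      have h3 := (mk_mem_center_iff N (h * g * h⁻¹ * g⁻¹)).mpr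
        (Subgroup.mem_upperCentralSeries_succ_iff.mp h2)
      simpa only [QuotientGroup.mk_mul, QuotientGroup.mk_inv] using h3
    have hfin : ∀ y : G ⧸ N, IsOfFinOrder ((h : G ⧸ N) * y * (h : G ⧸ N)⁻¹ * y⁻¹) := by
      intro y
      obtain ⟨g, rfl⟩ := QuotientGroup.mk_surjective y
      have h2 : h * g * h⁻¹ * g⁻¹ ∈ Subgroup.upperCentralSeries G (i + 2) :=
        Subgroup.mem_upperCentralSeries_succ_iff.mp hh g
      obtain ⟨m, hm, hmem⟩ := ih _ h2
      refine isOfFinOrder_iff_pow_eq_one.mpr ⟨m, hm, ?_⟩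
      have : (((h * g * h⁻¹ * g⁻¹) ^ m : G) : G ⧸ N) = 1 :=
        (QuotientGroup.eq_one_iff _).mpr hmem
      simpa only [QuotientGroup.mk_pow, QuotientGroup.mk_mul, QuotientGroup.mk_inv] using this
    obtain ⟨M, hM, hc⟩ := core_power_central (inferInstance : Group.FG (G ⧸ N)) _ hz hfin
    refine ⟨M, hM, ?_⟩
    have hc' : ((h ^ M : G) : G ⧸ N) ∈ Subgroup.center (G ⧸ N) := by
      simpa only [QuotientGroup.mk_pow] using hc
    exact Subgroup.mem_upperCentralSeries_succ_iff.mpr ((mk_mem_center_iff N (h ^ M)).mp hc')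

/-- Iterating, every element of `Z_{i+1}` has a positive power in the center. -/
private lemma desc_lemma {G : Type*} [Group G] (hfg : Group.FG G)
    (Hyp : ∀ g h : G, h ∈ Subgroup.upperCentralSeries G 2 → IsOfFinOrder (h * g * h⁻¹ * g⁻¹)) :
    ∀ i : ℕ, ∀ x ∈ Subgroup.upperCentralSeries G (i + 1),
      ∃ M : ℕ, 0 < M ∧ x ^ M ∈ Subgroup.center G := by
  intro i
  induction i with
  | zero =>
    intro x hx
    exact ⟨1, Nat.one_pos, by rwa [pow_one, ← Subgroup.upperCentralSeries_one]⟩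
  | succ i ih =>
    intro x hx
    obtain ⟨m, hm, hmem⟩ := step_lemma hfg Hyp i x hx
    obtain ⟨M, hM, hMem⟩ := ih _ hmem
    exact ⟨m * M, Nat.mul_pos hm hM, by rwa [pow_mul]⟩

/-- Under the torsion-commutator assumption, the quotient by the center is a
torsion group. -/
private lemma quotient_center_torsion {G : Type*} [Group G] [Group.IsNilpotent G]
    (hfg : Group.FG G)
    (Hyp : ∀ g h : G, h ∈ Subgroup.upperCentralSeries G 2 → IsOfFinOrder (h * g * h⁻¹ * g⁻¹)) :
    Monoid.IsTorsion (G ⧸ Subgroup.center G) := by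
  intro y
  obtain ⟨x, rfl⟩ := QuotientGroup.mk_surjective y
  obtain ⟨n, hn⟩ := Group.IsNilpotent.nilpotent (G := G)
  have hx : x ∈ Subgroup.upperCentralSeries G n := hn ▸ Subgroup.mem_top x
  have hpow : ∃ M : ℕ, 0 < M ∧ x ^ M ∈ Subgroup.center G := by
    cases n with
    | zero =>
      have : x = 1 := by simpa [Subgroup.upperCentralSeries_zero] using hx
      exact ⟨1, Nat.one_pos, by simp [this, Subgroup.one_mem]⟩
    | succ i => exact desc_lemma hfg Hyp i x hx
  obtain ⟨M, hM, hmem⟩ := hpow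
  refine isOfFinOrder_iff_pow_eq_one.mpr ⟨M, hM, ?_⟩
  have : ((x ^ M : G) : G ⧸ Subgroup.center G) = 1 := (QuotientGroup.eq_one_iff _).mpr hmem
  simpa only [QuotientGroup.mk_pow] using this

/-- A finitely generated nilpotent torsion group is finite. -/
private lemma finite_of_fg_torsion_nilpotent_aux (c : ℕ) :
    ∀ (G : Type) [Group G] [Group.IsNilpotent G], Group.FG G → Monoid.IsTorsion G →
      Group.nilpotencyClass G ≤ c → Finite G := by
  induction c with
  | zero =>
    intro G _ _ _ _ hc
    haveI : Subsingleton G := nilpotencyClass_zero_iff_subsingleton.mp (Nat.le_zero.mp hc)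
    infer_instance
  | succ c ih =>
    intro G _ _ hfg ht hc
    haveI : Group.FG G := hfg
    have hq : Group.nilpotencyClass (G ⧸ Subgroup.center G) ≤ c := by
      rw [nilpotencyClass_quotient_center]; omega
    haveI : Finite (G ⧸ Subgroup.center G) :=
      ih (G ⧸ Subgroup.center G) inferInstance
        (IsTorsion.of_surjective (QuotientGroup.mk'_surjective (Subgroup.center G)) ht) hq
    haveI : (Subgroup.center G).FiniteIndex := ⟨Subgroup.index_ne_zero_of_finite⟩
    haveI : Group.FG (Subgroup.center G) := Subgroup.fg_of_index_ne_zero _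
    haveI : Finite (Subgroup.center G) :=
      (open scoped IsMulCommutative in finite_of_comm_fg_torsion _ inferInstance (IsTorsion.subgroup ht _))
    exact Finite.of_equiv _ (Subgroup.groupEquivQuotientProdSubgroup (s := Subgroup.center G)).symm

/-- A group is virtually abelian if it has an abelian subgroup of finite index. -/
def IsVirtuallyAbelian (G : Type*) [Group G] : Prop :=
  ∃ H : Subgroup G, H.FiniteIndex ∧ ∀ x y : H, x * y = y * x

/-- In a finitely generated nilpotent group which is not
virtually abelian there are `g ∈ G` and `h ∈ Z₂` (the second term of the upper
central series) whose commutator `g⁻¹h⁻¹gh` has infinite order. -/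
theorem exists_commutator_infinite_order_of_nilpotent_not_virtuallyAbelian
    (G : Type) [Group G] (hfg : Group.FG G) [Group.IsNilpotent G]
    (hna : ¬ IsVirtuallyAbelian G) :
    ∃ (g h : G), h ∈ _root_.upperCentralSeries G 2 ∧ ¬ IsOfFinOrder (g⁻¹ * h⁻¹ * g * h) := by
  by_contra hcon
  push_neg at hcon
  have Hyp : ∀ g h : G, h ∈ Subgroup.upperCentralSeries G 2 → IsOfFinOrder (h * g * h⁻¹ * g⁻¹) := by
    intro g h hh
    have h1 : IsOfFinOrder ((g⁻¹)⁻¹ * h⁻¹ * g⁻¹ * h) := hcon g⁻¹ h hh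
    have heq : h * g * h⁻¹ * g⁻¹ = h * ((g⁻¹)⁻¹ * h⁻¹ * g⁻¹ * h) * h⁻¹ := by group
    rw [heq]
    obtain ⟨n, hn, hv⟩ := isOfFinOrder_iff_pow_eq_one.mp h1
    exact isOfFinOrder_iff_pow_eq_one.mpr ⟨n, hn, by rw [conj_pow, hv, mul_one, mul_inv_cancel]⟩
  have ht : Monoid.IsTorsion (G ⧸ Subgroup.center G) := quotient_center_torsion hfg Hyp
  haveI : Group.FG G := hfg
  haveI : Finite (G ⧸ Subgroup.center G) :=
    finite_of_fg_torsion_nilpotent_aux (Group.nilpotencyClass (G ⧸ Subgroup.center G))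
      (G ⧸ Subgroup.center G) inferInstance ht le_rfl
  refine hna ⟨Subgroup.center G, ⟨Subgroup.index_ne_zero_of_finite⟩, ?_⟩
  intro x y
  have := Subgroup.mem_center_iff.mp y.2 x.1
  exact Subtype.ext (by simpa using this)
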